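/- Let G be a cubic (3-regular) bipartite multigraph with classes A, B and edge distortions r_e over {0,1,2,3}, and let M, M', M'' be a decomposition of E(G) into three perfect matchings. Let C be a cycle of the 2-factor M' ∪ M''. Then there is a 4-colouring f_A of the edges of M incident with C ∩ A such that for every 4-colouring f_B of the edges of M \ M_{C∩A} incident with B-vertices of C, there is a 4-colouring f_C of E(C) making f_A ∪ f_B ∪ f_C a proper distortion-colouring of the edges of M_{C∩A} ∪ M_{C∩B} ∪ E(C). -/

import Mathlib

open Finset

namespace Stmt12

/-- reachable colours along a constraint path -/
def reach (L : ℕ → Finset (Fin 4)) (σ : ℕ → Equiv.Perm (Fin 4)) (c : Fin 4) :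
    ℕ → Finset (Fin 4)
  | 0 => {c}
  | (k+1) => (L (k+1)).filter fun d => ∃ t ∈ reach L σ c k, σ k t ≠ d

variable {L : ℕ → Finset (Fin 4)} {σ : ℕ → Equiv.Perm (Fin 4)} {c : Fin 4}

lemma reach_subset {k : ℕ} : reach L σ c (k+1) ⊆ L (k+1) :=
  Finset.filter_subset _ _

lemma reach_chain : ∀ k, ∀ t ∈ reach L σ c k,
    ∃ f : ℕ → Fin 4, f 0 = c ∧ f k = t ∧
      (∀ i, 0 < i → i ≤ k → f i ∈ L i) ∧ (∀ i < k, σ i (f i) ≠ f (i+1)) := by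
  intro k
  induction k with
  | zero =>
    intro t ht
    simp only [reach, Finset.mem_singleton] at ht
    exact ⟨fun _ => c, rfl, by simp [ht], by omega, by omega⟩
  | succ k ih =>
    intro t ht
    simp only [reach, Finset.mem_filter] at ht
    obtain ⟨htL, s, hs, hst⟩ := ht
    obtain ⟨f, hf0, hfk, hfL, hfσ⟩ := ih s hs
    refine ⟨Function.update f (k+1) t, ?_, ?_, ?_, ?_⟩
    · rw [Function.update_of_ne (by omega)]; exact hf0
    · simp
    · intro i hi hik
      rcases eq_or_ne i (k+1) with rfl | hne
      · simpa using htL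
      · rw [Function.update_of_ne hne]; exact hfL i hi (by omega)
    · intro i hik
      rcases eq_or_ne i k with rfl | hne
      · rw [Function.update_of_ne (by omega : i ≠ i+1) , Function.update_self, hfk]
        exact hst
      · rw [Function.update_of_ne (by omega), Function.update_of_ne (by omega)]
        exact hfσ i (by omega)

lemma reach_nonempty {k : ℕ} (hL : ∀ i, 0 < i → i ≤ k → 2 ≤ (L i).card) :
    (reach L σ c k).Nonempty := by
  induction k with
  | zero => exact ⟨c, by simp [reach]⟩
  | succ k ih =>
    obtain ⟨t, ht⟩ := ih (fun i h1 h2 => hL i h1 (by omega))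
    have h2 : 2 ≤ (L (k+1)).card := hL (k+1) (by omega) le_rfl
    obtain ⟨b, hb, hbne⟩ := Finset.exists_mem_ne (lt_of_lt_of_le one_lt_two h2) (σ k t)
    exact ⟨b, by simp only [reach, Finset.mem_filter]; exact ⟨hb, t, ht, fun h => hbne h.symm⟩⟩

lemma reach_full {k : ℕ} (h2 : 2 ≤ (reach L σ c k).card) :
    reach L σ c (k+1) = L (k+1) := by
  apply Finset.Subset.antisymm reach_subset
  intro d hd
  obtain ⟨t1, ht1, t2, ht2, hne⟩ := Finset.one_lt_card.mp h2
  simp only [reach, Finset.mem_filter]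
  refine ⟨hd, ?_⟩
  by_cases h : σ k t1 = d
  · exact ⟨t2, ht2, fun h2 => hne (σ k |>.injective (h.trans h2.symm))⟩
  · exact ⟨t1, ht1, h⟩

lemma reach_singleton {k : ℕ} {t : Fin 4} (h : reach L σ c k = {t}) :
    reach L σ c (k+1) = (L (k+1)).erase (σ k t) := by
  ext d
  simp only [reach, Finset.mem_filter, h, Finset.mem_singleton, Finset.mem_erase,
    exists_eq_left]
  tauto


lemma reach_zero : reach L σ c 0 = {c} := rfl

lemma fail_analysis {n : ℕ} (hn : 2 ≤ n) (hL : ∀ i < n, 2 ≤ (L i).card)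
    (hc : c ∈ L 0)
    (hfail : ∀ d ∈ reach L σ c (n-1), σ (n-1) d = c) :
    (σ 0 c ∈ L 1 ∧ (L 1).card = 2) ∧
    ∃ t ∈ L (n-1), σ (n-1) t = c ∧ (L (n-1)).card = 2 := by
  have hL' : ∀ i, 0 < i → i ≤ n-1 → 2 ≤ (L i).card := fun i h1 h2 => hL i (by omega)
  -- reach (n-1) is a singleton
  have hend1 : (reach L σ c (n-1)).card ≤ 1 := by
    by_contra h
    obtain ⟨t1, ht1, t2, ht2, hne2⟩ := Finset.one_lt_card.mp
      (show 1 < (reach L σ c (n-1)).card by omega)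
    exact hne2 ((σ (n-1)).injective ((hfail t1 ht1).trans (hfail t2 ht2).symm))
  have hend : (reach L σ c (n-1)).card = 1 :=
    le_antisymm hend1
      (Finset.card_pos.mpr (reach_nonempty (σ := σ) (c := c) (k := n-1) hL'))
  -- all intermediate reach sets are singletons
  have hsing : ∀ k, 1 ≤ k → k ≤ n-1 → (reach L σ c k).card = 1 := by
    intro k hk1 hk2
    by_contra h
    have h2 : 2 ≤ (reach L σ c k).card := by
      have := Finset.card_pos.mpr (reach_nonempty (σ := σ) (c := c) (k := k)
        (fun i a b => hL i (by omega)))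
      omega
    have mono : ∀ j, k + j ≤ n-1 → 2 ≤ (reach L σ c (k + j)).card := by
      intro j
      induction j with
      | zero => intro _; simpa using h2
      | succ j ih =>
        intro hj
        have h3 := ih (by omega)
        rw [show k + (j+1) = (k+j)+1 by ring, reach_full h3]
        exact hL _ (by omega)
    have := mono (n-1-k) (by omega)
    rw [show k + (n-1-k) = n-1 by omega] at this
    omega
  have h1 : (σ 0 c ∈ L 1 ∧ (L 1).card = 2) := by
    have hr1 : reach L σ c 1 = (L 1).erase (σ 0 c) :=
      reach_singleton (k := 0) reach_zero
    have hcard := hsing 1 le_rfl (by omega)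
    rw [hr1] at hcard
    by_cases hm : σ 0 c ∈ L 1
    · rw [Finset.card_erase_of_mem hm] at hcard
      have := hL 1 (by omega)
      exact ⟨hm, by omega⟩
    · rw [Finset.erase_eq_of_notMem hm] at hcard
      have := hL 1 (by omega)
      omega
  refine ⟨h1, ?_⟩
  obtain ⟨t, ht⟩ := Finset.card_eq_one.mp hend
  have htL : t ∈ L (n-1) := by
    have : t ∈ reach L σ c (n-1) := ht ▸ Finset.mem_singleton_self t
    rcases Nat.exists_eq_add_of_le (show 1 ≤ n-1 by omega) with ⟨j, hj⟩
    rw [show n-1 = j+1 by omega] at this ⊢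
    exact reach_subset this
  refine ⟨t, htL, hfail t (ht ▸ Finset.mem_singleton_self t), ?_⟩
  rcases eq_or_lt_of_le (show 2 ≤ n from hn) with h | h
  · rw [show n-1 = 1 by omega] at ht ⊢
    exact h1.2
  · -- n ≥ 3, use reach (n-2) singleton
    obtain ⟨s, hs⟩ := Finset.card_eq_one.mp (hsing (n-2) (by omega) (by omega))
    have hr : reach L σ c (n-1) = (L (n-1)).erase (σ (n-2) s) := by
      have := reach_singleton (k := n-2) hs
      rwa [show n-2+1 = n-1 by omega] at this
    rw [hr] at ht
    have hcard : ((L (n-1)).erase (σ (n-2) s)).card = 1 := by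
      rw [ht]; exact Finset.card_singleton t
    by_cases hm : σ (n-2) s ∈ L (n-1)
    · rw [Finset.card_erase_of_mem hm] at hcard
      have := hL (n-1) (by omega)
      omega
    · rw [Finset.erase_eq_of_notMem hm] at hcard
      have := hL (n-1) (by omega)
      omega

lemma three_distinct {s : Finset (Fin 4)} (h : 3 ≤ s.card) :
    ∃ a ∈ s, ∃ b ∈ s, ∃ c ∈ s, a ≠ b ∧ a ≠ c ∧ b ≠ c := by
  obtain ⟨a, ha, b, hb, hab⟩ := Finset.one_lt_card.mp (show 1 < s.card by omega)
  have h1 : s.card - 1 ≤ (s.erase a).card := Finset.pred_card_le_card_erase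
  have h2 : (s.erase a).card - 1 ≤ ((s.erase a).erase b).card :=
    Finset.pred_card_le_card_erase
  have h3 : 0 < ((s.erase a).erase b).card := by omega
  obtain ⟨c, hc⟩ := Finset.card_pos.mp h3
  have hc1 := Finset.mem_of_mem_erase hc
  exact ⟨a, ha, b, hb, c, Finset.mem_of_mem_erase hc1,
    hab, fun h => (Finset.ne_of_mem_erase hc1 h.symm).elim,
    fun h => (Finset.ne_of_mem_erase hc h.symm).elim⟩

lemma card_triple {a b c : Fin 4} (hab : a ≠ b) (hac : a ≠ c) (hbc : b ≠ c) :
    ({a, b, c} : Finset (Fin 4)).card = 3 :=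
  Finset.card_eq_three.mpr ⟨a, b, c, hab, hac, hbc, rfl⟩

/-- the main cycle colouring lemma -/
lemma cycLemma {n : ℕ} (hn : 2 ≤ n) (hL : ∀ i < n, 2 ≤ (L i).card)
    (hseam : 3 ≤ (L 0).card ∨ ∃ t ∈ L (n-1), σ (n-1) t ∉ L 0) :
    ∃ f : ℕ → Fin 4, f n = f 0 ∧ (∀ i < n, f i ∈ L i) ∧
      (∀ i < n, σ i (f i) ≠ f (i+1)) := by
  suffices hsucc : ∃ c ∈ L 0, ∃ d ∈ reach L σ c (n-1), σ (n-1) d ≠ c by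
    obtain ⟨c, hc, d, hd, hdc⟩ := hsucc
    obtain ⟨f, hf0, hfd, hfL, hfσ⟩ := reach_chain (n-1) d hd
    refine ⟨fun i => if i = n then c else f i, ?_, ?_, ?_⟩
    · show (if n = n then c else f n) = (if 0 = n then c else f 0)
      rw [if_pos rfl, if_neg (show ¬(0:ℕ) = n by omega), hf0]
    · intro i hi
      show (if i = n then c else f i) ∈ L i
      rw [if_neg (by omega)]
      rcases Nat.eq_zero_or_pos i with rfl | hpos
      · rw [hf0]; exact hc
      · exact hfL i hpos (by omega)
    · intro i hi
      show σ i (if i = n then c else f i) ≠ (if i+1 = n then c else f (i+1))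
      rcases eq_or_lt_of_le (show i+1 ≤ n by omega) with he | hlt
      · rw [if_neg (by omega), if_pos he, show i = n-1 by omega, hfd]
        exact hdc
      · rw [if_neg (by omega), if_neg (by omega)]
        exact hfσ i (by omega)
  by_contra hcon
  push_neg at hcon
  rcases hseam with hbig | ⟨t0, ht0, ht0n⟩
  · obtain ⟨c1, hc1, c2, hc2, c3, hc3, h12, h13, h23⟩ := three_distinct hbig
    have f1 := (fail_analysis hn hL hc1 (hcon c1 hc1)).1
    have f2 := (fail_analysis hn hL hc2 (hcon c2 hc2)).1
    have f3 := (fail_analysis hn hL hc3 (hcon c3 hc3)).1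
    have hsub : ({σ 0 c1, σ 0 c2, σ 0 c3} : Finset (Fin 4)) ⊆ L 1 := by
      intro x hx
      simp only [Finset.mem_insert, Finset.mem_singleton] at hx
      rcases hx with rfl | rfl | rfl
      exacts [f1.1, f2.1, f3.1]
    have := Finset.card_le_card hsub
    rw [card_triple (fun h => h12 ((σ 0).injective h))
      (fun h => h13 ((σ 0).injective h)) (fun h => h23 ((σ 0).injective h)),
      f1.2] at this
    omega
  · obtain ⟨c1, hc1, c2, hc2, h12⟩ := Finset.one_lt_card.mp
      (lt_of_lt_of_le one_lt_two (hL 0 (by omega)))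
    obtain ⟨t1, ht1, hσ1, hcard⟩ := (fail_analysis hn hL hc1 (hcon c1 hc1)).2
    obtain ⟨t2, ht2, hσ2, -⟩ := (fail_analysis hn hL hc2 (hcon c2 hc2)).2
    have h01 : t0 ≠ t1 := fun h => ht0n (h ▸ hσ1 ▸ (hσ1 ▸ hc1))
    have h02 : t0 ≠ t2 := fun h => ht0n (by rw [h, hσ2]; exact hc2)
    have ht12 : t1 ≠ t2 := fun h => h12 (by rw [← hσ1, ← hσ2, h])
    have hsub : ({t0, t1, t2} : Finset (Fin 4)) ⊆ L (n-1) := by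
      intro x hx
      simp only [Finset.mem_insert, Finset.mem_singleton] at hx
      rcases hx with rfl | rfl | rfl
      exacts [ht0, ht1, ht2]
    have := Finset.card_le_card hsub
    rw [card_triple h01 h02 ht12, hcard] at this
    omega


/-- the alternating walk along the cycle -/
def walk {E : Type} (αf βf : E → E) (e0 : E) : ℕ → E
  | 0 => e0
  | (k+1) => if Even k then αf (walk αf βf e0 k) else βf (walk αf βf e0 k)

lemma build {E : Type} [Fintype E] (S : Finset E) (αf βf : E → E) (e0 : E)
    (ρ : E → Equiv.Perm (Fin 4)) (elist : E → Finset (Fin 4)) (F0 : E → Fin 4)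
    (hαS : ∀ x ∈ S, αf x ∈ S) (hαne : ∀ x ∈ S, αf x ≠ x)
    (hαinv : ∀ x ∈ S, αf (αf x) = x)
    (hβS : ∀ x ∈ S, βf x ∈ S) (hβne : ∀ x ∈ S, βf x ≠ x)
    (hβinv : ∀ x ∈ S, βf (βf x) = x)
    (he0 : e0 ∈ S)
    (hconn : ∀ g ∈ S, Relation.ReflTransGen
        (fun x y => x ∈ S ∧ y ∈ S ∧ (y = αf x ∨ y = βf x)) e0 g)
    (hcard : ∀ x ∈ S, 2 ≤ (elist x).card)
    (hseam : 3 ≤ (elist e0).card ∨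
      ∃ t ∈ elist (βf e0), (ρ e0).symm (ρ (βf e0) t) ∉ elist e0) :
    ∃ F : E → Fin 4, (∀ x, x ∉ S → F x = F0 x) ∧ (∀ x ∈ S, F x ∈ elist x) ∧
      (∀ x ∈ S, F x ≠ F (αf x)) ∧
      (∀ x ∈ S, ρ x (F x) ≠ ρ (βf x) (F (βf x))) := by
  classical
  set φ : E → E := fun x => βf (αf x) with hφdef
  set ψ : E → E := fun x => αf (βf x) with hψdef
  have hφS : ∀ x ∈ S, φ x ∈ S := fun x hx => hβS _ (hαS _ hx)
  have hψS : ∀ x ∈ S, ψ x ∈ S := fun x hx => hαS _ (hβS _ hx)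
  have hψφ : ∀ x ∈ S, ψ (φ x) = x := by
    intro x hx
    show αf (βf (βf (αf x))) = x
    rw [hβinv _ (hαS _ hx), hαinv _ hx]
  have hφψ : ∀ x ∈ S, φ (ψ x) = x := by
    intro x hx
    show βf (αf (αf (βf x))) = x
    rw [hαinv _ (hβS _ hx), hβinv _ hx]
  have hφiterS : ∀ k, ∀ x ∈ S, φ^[k] x ∈ S := by
    intro k
    induction k with
    | zero => intro x hx; simpa using hx
    | succ k ih =>
      intro x hx
      rw [Function.iterate_succ_apply']
      exact hφS _ (ih x hx)
  have hψiterφ : ∀ k, ∀ x ∈ S, ψ^[k] (φ^[k] x) = x := by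
    intro k
    induction k with
    | zero => intro x _; simp
    | succ k ih =>
      intro x hx
      rw [Function.iterate_succ_apply' (f := φ), Function.iterate_succ_apply (f := ψ),
        hψφ _ (hφiterS k x hx)]
      exact ih x hx
  have hψiterS : ∀ k, ∀ x ∈ S, ψ^[k] x ∈ S := by
    intro k
    induction k with
    | zero => intro x hx; simpa using hx
    | succ k ih =>
      intro x hx
      rw [Function.iterate_succ_apply']
      exact hψS _ (ih x hx)
  have hφiterψ : ∀ k, ∀ x ∈ S, φ^[k] (ψ^[k] x) = x := by
    intro k
    induction k with
    | zero => intro x _; simp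
    | succ k ih =>
      intro x hx
      rw [Function.iterate_succ_apply' (f := ψ), Function.iterate_succ_apply (f := φ),
        hφψ _ (hψiterS k x hx)]
      exact ih x hx
  have hαφ : ∀ k, ∀ x ∈ S, αf (φ^[k] x) = ψ^[k] (αf x) := by
    intro k
    induction k with
    | zero => intro x _; simp
    | succ k ih =>
      intro x hx
      rw [Function.iterate_succ_apply (f := φ), ih _ (hφS _ hx),
        Function.iterate_succ_apply (f := ψ)]
  -- the period of the φ-orbit
  have cancel : ∀ i j, i < j → φ^[i] e0 = φ^[j] e0 → φ^[j-i] e0 = e0 := by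
    intro i j hij heq
    have h1 : φ^[j] e0 = φ^[i] (φ^[j-i] e0) := by
      rw [← Function.iterate_add_apply]
      congr 1
      omega
    have h2 := congrArg (ψ^[i]) heq
    rw [h1, hψiterφ i _ (hφiterS _ e0 he0), hψiterφ i e0 he0] at h2
    exact h2.symm
  have hper : ∃ k, 0 < k ∧ φ^[k] e0 = e0 := by
    obtain ⟨i, hi, j, hj, hne, heq⟩ := Finset.exists_ne_map_eq_of_card_lt_of_maps_to
      (s := Finset.range (S.card + 1)) (t := S)
      (by rw [Finset.card_range]; omega)
      (fun k _ => hφiterS k e0 he0)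
    rcases lt_or_gt_of_ne hne with h | h
    · exact ⟨j - i, by omega, cancel i j h heq⟩
    · exact ⟨i - j, by omega, cancel j i h heq.symm⟩
  set M := Nat.find hper with hMdef
  obtain ⟨hM0, hMe⟩ : 0 < M ∧ φ^[M] e0 = e0 := Nat.find_spec hper
  have hMmin : ∀ k, 0 < k → k < M → φ^[k] e0 ≠ e0 := by
    intro k h1 h2 h3
    exact Nat.find_min hper h2 ⟨h1, h3⟩
  set n := 2 * M with hndef
  have hperiod : ∀ s q, φ^[s + M * q] e0 = φ^[s] e0 := by
    intro s q
    induction q with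
    | zero => simp
    | succ q ih =>
      have h : s + M * (q+1) = (s + M * q) + M := by ring
      rw [h, Function.iterate_add_apply, hMe, ih]
  have horbinj : ∀ i j, i < M → j < M → φ^[i] e0 = φ^[j] e0 → i = j := by
    intro i j hi hj heq
    rcases lt_trichotomy i j with h | h | h
    · exact absurd (cancel i j h heq) (hMmin _ (by omega) (by omega))
    · exact h
    · exact absurd (cancel j i h heq.symm) (hMmin _ (by omega) (by omega))
  -- the image of the orbit under αf is disjoint from the orbit
  have hdisj : ∀ a b, αf (φ^[b] e0) ≠ φ^[a] e0 := by
    intro a b heq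
    have h1 : αf e0 = φ^[a+b] e0 := by
      have h2 := congrArg (φ^[b]) ((hαφ b e0 he0).symm.trans heq)
      rw [hφiterψ b _ (hαS _ he0)] at h2
      rw [h2, ← Function.iterate_add_apply]
      congr 1
      omega
    set s := (a + b) % M with hsdef
    have hs : αf e0 = φ^[s] e0 := by
      rw [h1]
      have hd : a + b = s + M * ((a+b) / M) := by
        rw [hsdef]; exact (Nat.mod_add_div (a+b) M).symm
      rw [hd, hperiod]
    have hsM : s < M := Nat.mod_lt _ hM0
    have hgen : ∀ k, αf (φ^[k] e0) = φ^[s + M * (k+1) - k] e0 := by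
      intro k
      have h3 : φ^[s] e0 = φ^[s + M * (k+1)] e0 := (hperiod s (k+1)).symm
      have h4 : s + M * (k+1) = k + (s + M * (k+1) - k) := by
        have : k ≤ M * (k+1) := by nlinarith
        omega
      have h5 : ψ^[k] (φ^[s + M * (k+1)] e0) = φ^[s + M * (k+1) - k] e0 := by
        conv_lhs => rw [h4]
        rw [Function.iterate_add_apply, hψiterφ k _ (hφiterS _ e0 he0)]
      rw [hαφ k e0 he0, hs, h3, h5]
    rcases Nat.even_or_odd s with ⟨u, hu⟩ | ⟨u, hu⟩
    · -- s = u + u : αf has a fixed point, contradiction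
      apply hαne (φ^[u] e0) (hφiterS u e0 he0)
      rw [hgen u]
      have hle : u ≤ M * (u + 1) := by nlinarith
      rw [show s + M * (u+1) - u = u + M * (u+1) by omega]
      exact hperiod u (u+1)
    · -- s = 2u + 1 : βf has a fixed point, contradiction
      have hβφ : ∀ k, βf (φ^[k] e0) = φ^[(s + M * (k+1) - k) + 1] e0 := by
        intro k
        have h6 : βf (φ^[k] e0) = φ (αf (φ^[k] e0)) := by
          show βf (φ^[k] e0) = βf (αf (αf (φ^[k] e0)))
          rw [hαinv _ (hφiterS k e0 he0)]
        rw [h6, hgen k]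
        exact (Function.iterate_succ_apply' φ _ e0).symm
      apply hβne (φ^[u+1] e0) (hφiterS (u+1) e0 he0)
      rw [hβφ (u+1)]
      have hle : u + 1 ≤ M * (u + 1 + 1) := by nlinarith
      rw [show (s + M * (u+1+1) - (u+1)) + 1 = (u+1) + M * (u+1+1) by omega]
      exact hperiod (u+1) (u+1+1)
  have hn' : n = 2 * M := hndef
  -- walk facts
  have hwA : ∀ i, Even i → walk αf βf e0 (i+1) = αf (walk αf βf e0 i) := by
    intro i hi; simp [walk, hi]
  have hwB : ∀ i, ¬ Even i → walk αf βf e0 (i+1) = βf (walk αf βf e0 i) := by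
    intro i hi; simp [walk, hi]
  have hweven : ∀ k, walk αf βf e0 (2*k) = φ^[k] e0 := by
    intro k
    induction k with
    | zero => rfl
    | succ k ih =>
      have h1 : 2*(k+1) = (2*k+1)+1 := by ring
      have hne : ¬ Even (2*k+1) := by rintro ⟨t, ht⟩; omega
      rw [h1, hwB (2*k+1) hne, hwA (2*k) ⟨k, two_mul k⟩, ih]
      exact (Function.iterate_succ_apply' φ k e0).symm
  have hwS : ∀ k, walk αf βf e0 k ∈ S := by
    intro k
    induction k with
    | zero => exact he0
    | succ k ih =>
      by_cases h : Even k
      · rw [hwA k h]; exact hαS _ ih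
      · rw [hwB k h]; exact hβS _ ih
  have hwn : walk αf βf e0 n = e0 := by
    rw [hn', hweven M, hMe]
  have hoddn1 : ¬ Even (n-1) := by rintro ⟨t, ht⟩; omega
  have hwpred : walk αf βf e0 (n-1) = βf e0 := by
    have h1 : walk αf βf e0 ((n-1)+1) = βf (walk αf βf e0 (n-1)) := hwB _ hoddn1
    rw [show (n-1)+1 = n by omega, hwn] at h1
    have h2 := congrArg βf h1
    rw [hβinv _ (hwS (n-1))] at h2
    exact h2.symm
  -- injectivity of the walk on [0, n)
  have hwinj : ∀ i j, i < n → j < n → walk αf βf e0 i = walk αf βf e0 j → i = j := by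
    intro i j hi hj heq
    rcases Nat.even_or_odd i with ⟨a, ha⟩ | ⟨a, ha⟩ <;>
      rcases Nat.even_or_odd j with ⟨b, hb⟩ | ⟨b, hb⟩
    · have e1 : walk αf βf e0 i = φ^[a] e0 := by rw [show i = 2*a by omega, hweven]
      have e2 : walk αf βf e0 j = φ^[b] e0 := by rw [show j = 2*b by omega, hweven]
      have := horbinj a b (by omega) (by omega) (e1.symm.trans (heq.trans e2))
      omega
    · have e1 : walk αf βf e0 i = φ^[a] e0 := by rw [show i = 2*a by omega, hweven]
      have e2 : walk αf βf e0 j = αf (φ^[b] e0) := by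
        rw [show j = 2*b+1 by omega, hwA (2*b) ⟨b, two_mul b⟩, hweven]
      exact absurd (e2.symm.trans (heq.symm.trans e1)) (hdisj a b)
    · have e1 : walk αf βf e0 i = αf (φ^[a] e0) := by
        rw [show i = 2*a+1 by omega, hwA (2*a) ⟨a, two_mul a⟩, hweven]
      have e2 : walk αf βf e0 j = φ^[b] e0 := by rw [show j = 2*b by omega, hweven]
      exact absurd (e1.symm.trans (heq.trans e2)) (hdisj b a)
    · have e1 : walk αf βf e0 i = αf (φ^[a] e0) := by
        rw [show i = 2*a+1 by omega, hwA (2*a) ⟨a, two_mul a⟩, hweven]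
      have e2 : walk αf βf e0 j = αf (φ^[b] e0) := by
        rw [show j = 2*b+1 by omega, hwA (2*b) ⟨b, two_mul b⟩, hweven]
      have h1 := congrArg αf (e1.symm.trans (heq.trans e2))
      rw [hαinv _ (hφiterS a e0 he0), hαinv _ (hφiterS b e0 he0)] at h1
      have := horbinj a b (by omega) (by omega) h1
      omega
  -- surjectivity of the walk
  have hwsurj : ∀ x ∈ S, ∃ i, i < n ∧ walk αf βf e0 i = x := by
    have hstepcl : ∀ b, b ∈ S → (∃ i, i < n ∧ walk αf βf e0 i = b) →
        (∃ i, i < n ∧ walk αf βf e0 i = αf b) ∧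
        (∃ i, i < n ∧ walk αf βf e0 i = βf b) := by
      rintro b hb ⟨i, hi, hib⟩
      rcases Nat.even_or_odd i with ⟨a, ha⟩ | ⟨a, ha⟩
      · constructor
        · exact ⟨i+1, by omega, by rw [hwA i ⟨a, by omega⟩, hib]⟩
        · rcases Nat.eq_zero_or_pos i with rfl | hpos
          · refine ⟨n-1, by omega, ?_⟩
            rw [hwpred]
            exact congrArg βf hib
          · have hodd' : ¬ Even (i-1) := by rintro ⟨t, ht⟩; omega
            have h3 : walk αf βf e0 ((i-1)+1) = βf (walk αf βf e0 (i-1)) :=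
              hwB (i-1) hodd'
            rw [show (i-1)+1 = i by omega] at h3
            refine ⟨i-1, by omega, ?_⟩
            have h4 := congrArg βf h3
            rw [hβinv _ (hwS (i-1))] at h4
            rw [← h4, hib]
      · constructor
        · have h3 : walk αf βf e0 ((i-1)+1) = αf (walk αf βf e0 (i-1)) :=
            hwA (i-1) ⟨a, by omega⟩
          rw [show (i-1)+1 = i by omega] at h3
          refine ⟨i-1, by omega, ?_⟩
          have h4 := congrArg αf h3
          rw [hαinv _ (hwS (i-1))] at h4
          rw [← h4, hib]
        · have hodd' : ¬ Even i := by rintro ⟨t, ht⟩; omega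
          rcases eq_or_lt_of_le (show i+1 ≤ n by omega) with he | hlt
          · refine ⟨0, by omega, ?_⟩
            have h3 : walk αf βf e0 (i+1) = βf (walk αf βf e0 i) := hwB i hodd'
            rw [he, hwn, hib] at h3
            exact h3
          · exact ⟨i+1, hlt, by rw [hwB i hodd', hib]⟩
    intro x hx
    have h := hconn x hx
    clear hx
    induction h with
    | refl => exact ⟨0, by omega, rfl⟩
    | tail _ hbc ih =>
      obtain ⟨hbS, hcS, hc | hc⟩ := hbc <;> subst hc
      · exact (hstepcl _ hbS ih).1
      · exact (hstepcl _ hbS ih).2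
  -- apply the cycle colouring lemma
  have hseam2 : 3 ≤ (elist (walk αf βf e0 0)).card ∨
      ∃ t ∈ elist (walk αf βf e0 (n-1)),
        (if Even (n-1) then Equiv.refl (Fin 4)
         else (ρ (walk αf βf e0 (n-1))).trans (ρ (walk αf βf e0 ((n-1)+1))).symm) t
          ∉ elist (walk αf βf e0 0) := by
    rcases hseam with h | ⟨t, ht, htn⟩
    · left; exact h
    · right
      rw [if_neg hoddn1, hwpred, show (n-1)+1 = n by omega, hwn]
      exact ⟨t, ht, htn⟩
  obtain ⟨f, hfper, hfL, hfσ⟩ := cycLemma (n := n)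
    (L := fun i => elist (walk αf βf e0 i))
    (σ := fun i => if Even i then Equiv.refl (Fin 4)
      else (ρ (walk αf βf e0 i)).trans (ρ (walk αf βf e0 (i+1))).symm)
    (by omega) (fun i _ => hcard _ (hwS i)) hseam2
  set F : E → Fin 4 :=
    fun x => if hx : x ∈ S then f (hwsurj x hx).choose else F0 x with hFdef
  have hFw : ∀ i, i < n → F (walk αf βf e0 i) = f i := by
    intro i hi
    have hx := hwS i
    rw [hFdef]
    simp only [dif_pos hx]
    obtain ⟨h1, h2⟩ := (hwsurj (walk αf βf e0 i) hx).choose_spec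
    rw [hwinj _ _ h1 hi h2]
  refine ⟨F, ?_, ?_, ?_, ?_⟩
  · intro x hx; rw [hFdef]; simp only [dif_neg hx]
  · intro x hx
    obtain ⟨i, hi, rfl⟩ := hwsurj x hx
    rw [hFw i hi]
    exact hfL i hi
  · -- the αf constraint
    intro x hx
    obtain ⟨i, hi, rfl⟩ := hwsurj x hx
    rcases Nat.even_or_odd i with hev | hodd
    · have h1 : αf (walk αf βf e0 i) = walk αf βf e0 (i+1) := (hwA i hev).symm
      have hi1 : i + 1 < n := by obtain ⟨a, ha⟩ := hev; omega
      rw [hFw i hi, h1, hFw (i+1) hi1]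
      have hcon := hfσ i hi
      simp only [if_pos hev, Equiv.refl_apply] at hcon
      exact hcon
    · have hipos : 0 < i := by obtain ⟨a, ha⟩ := hodd; omega
      have hev' : Even (i-1) := by obtain ⟨a, ha⟩ := hodd; exact ⟨a, by omega⟩
      have h3 : walk αf βf e0 ((i-1)+1) = αf (walk αf βf e0 (i-1)) := hwA (i-1) hev'
      rw [show (i-1)+1 = i by omega] at h3
      have h4 := congrArg αf h3
      rw [hαinv _ (hwS (i-1))] at h4
      have hi1 : i - 1 < n := by omega
      rw [hFw i hi, h4, hFw (i-1) hi1]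
      have hcon := hfσ (i-1) hi1
      simp only [if_pos hev', Equiv.refl_apply] at hcon
      rw [show (i-1)+1 = i by omega] at hcon
      exact hcon.symm
  · -- the βf constraint
    intro x hx
    obtain ⟨i, hi, rfl⟩ := hwsurj x hx
    rcases Nat.even_or_odd i with hev | hodd
    · rcases Nat.eq_zero_or_pos i with rfl | hpos
      · have h1 : βf (walk αf βf e0 0) = walk αf βf e0 (n-1) := by
          rw [hwpred]; simp [walk]
        have hcon := hfσ (n-1) (by omega)
        simp only [if_neg hoddn1, Equiv.trans_apply] at hcon
        rw [show (n-1)+1 = n by omega] at hcon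
        rw [h1, hFw 0 (by omega), hFw (n-1) (by omega)]
        intro hh
        apply hcon
        rw [hfper, Equiv.symm_apply_eq, hwn]
        exact hh.symm
      · have hodd' : ¬ Even (i-1) := by obtain ⟨a, ha⟩ := hev; rintro ⟨t, ht⟩; omega
        have h3 : walk αf βf e0 ((i-1)+1) = βf (walk αf βf e0 (i-1)) := hwB (i-1) hodd'
        rw [show (i-1)+1 = i by omega] at h3
        have h4 := congrArg βf h3
        rw [hβinv _ (hwS (i-1))] at h4
        have hcon := hfσ (i-1) (by omega)
        simp only [if_neg hodd', Equiv.trans_apply] at hcon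
        rw [show (i-1)+1 = i by omega] at hcon
        rw [hFw i hi, h4, hFw (i-1) (by omega)]
        intro hh
        apply hcon
        rw [Equiv.symm_apply_eq]
        exact hh.symm
    · have hodd' : ¬ Even i := by obtain ⟨a, ha⟩ := hodd; rintro ⟨t, ht⟩; omega
      have h1 : walk αf βf e0 (i+1) = βf (walk αf βf e0 i) := hwB i hodd'
      have hcon := hfσ i hi
      simp only [if_neg hodd', Equiv.trans_apply] at hcon
      rcases eq_or_lt_of_le (show i+1 ≤ n by omega) with he | hlt
      · rw [hFw i hi, ← h1]
        have hF1 : F (walk αf βf e0 (i+1)) = f (i+1) := by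
          rw [he, hwn]
          exact (hFw 0 (by omega)).trans hfper.symm
        rw [hF1]
        intro hh
        apply hcon
        rw [Equiv.symm_apply_eq]
        exact hh
      · rw [hFw i hi, ← h1, hFw (i+1) hlt]
        intro hh
        apply hcon
        rw [Equiv.symm_apply_eq]
        exact hh


open Classical in
noncomputable def F0def {A E : Type} (S : Finset E) (ea : E → A) (fA fB : E → Fin 4) :
    E → Fin 4 :=
  fun x => if (∃ e' ∈ S, ea e' = ea x) then fA x else fB x

noncomputable def elistdef {A B E : Type} [Fintype E] (S : Finset E) (ea : E → A)
    (eb : E → B) (r : E → Equiv.Perm (Fin 4)) (hMA : A → E) (hMB : B → E)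
    (fA fB : E → Fin 4) : E → Finset (Fin 4) :=
  fun x => Finset.univ.filter fun c =>
    c ≠ fA (hMA (ea x)) ∧
    r x c ≠ r (hMB (eb x)) (F0def S ea fA fB (hMB (eb x)))

section Elist

variable {A B E : Type} [Fintype E] (S : Finset E) (ea : E → A) (eb : E → B)
  (r : E → Equiv.Perm (Fin 4)) (hMA : A → E) (hMB : B → E) (fA fB : E → Fin 4)

lemma elist_card2 (x : E) : 2 ≤ (elistdef S ea eb r hMA hMB fA fB x).card := by
  classical
  have hsub : Finset.univ \ {fA (hMA (ea x)),
      (r x).symm (r (hMB (eb x)) (F0def S ea fA fB (hMB (eb x))))} ⊆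
      elistdef S ea eb r hMA hMB fA fB x := by
    intro c hc
    simp only [Finset.mem_sdiff, Finset.mem_insert, Finset.mem_singleton,
      Finset.mem_univ, true_and] at hc
    push_neg at hc
    simp only [elistdef, Finset.mem_filter, Finset.mem_univ, true_and]
    refine ⟨hc.1, fun h => hc.2 ?_⟩
    rw [← h, Equiv.symm_apply_apply]
  have h1 := Finset.card_le_card hsub
  have h2 := Finset.card_sdiff_of_subset (Finset.subset_univ ({fA (hMA (ea x)),
      (r x).symm (r (hMB (eb x)) (F0def S ea fA fB (hMB (eb x))))} : Finset (Fin 4)))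
  have h3 := Finset.card_insert_le (fA (hMA (ea x)))
      ({(r x).symm (r (hMB (eb x)) (F0def S ea fA fB (hMB (eb x))))} : Finset (Fin 4))
  simp only [Finset.card_singleton, Finset.card_univ, Fintype.card_fin] at h2 h3
  omega

lemma elist_card3 (x : E)
    (h : fA (hMA (ea x)) =
      (r x).symm (r (hMB (eb x)) (F0def S ea fA fB (hMB (eb x))))) :
    3 ≤ (elistdef S ea eb r hMA hMB fA fB x).card := by
  classical
  have hsub : Finset.univ \ {fA (hMA (ea x))} ⊆ elistdef S ea eb r hMA hMB fA fB x := by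
    intro c hc
    simp only [Finset.mem_sdiff, Finset.mem_singleton, Finset.mem_univ, true_and] at hc
    simp only [elistdef, Finset.mem_filter, Finset.mem_univ, true_and]
    refine ⟨hc, fun hh => hc ?_⟩
    rw [h, ← hh, Equiv.symm_apply_apply]
  have h1 := Finset.card_le_card hsub
  have h2 := Finset.card_sdiff_of_subset
    (Finset.subset_univ ({fA (hMA (ea x))} : Finset (Fin 4)))
  simp only [Finset.card_singleton, Finset.card_univ, Fintype.card_fin] at h2
  omega

end Elist

lemma finalize {A B E : Type} [Fintype E] (ea : E → A) (eb : E → B)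
    (r : E → Equiv.Perm (Fin 4)) (m : E → Fin 3) (S : Finset E)
    (αf βf : E → E) (hMA : A → E) (hMB : B → E)
    (hS2f : ∀ e ∈ S, m e ≠ 0)
    (hMAuniq : ∀ v e, m e = 0 → ea e = v → e = hMA v)
    (hMBuniq : ∀ w e, m e = 0 → eb e = w → e = hMB w)
    (hαuniq : ∀ x ∈ S, ∀ z ∈ S, ea z = ea x → z = x ∨ z = αf x)
    (hβuniq : ∀ x ∈ S, ∀ z ∈ S, eb z = eb x → z = x ∨ z = βf x)
    (fA fB : E → Fin 4) (F : E → Fin 4)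
    (hP0 : ∀ x, x ∉ S → F x = F0def S ea fA fB x)
    (hP1 : ∀ x ∈ S, F x ∈ elistdef S ea eb r hMA hMB fA fB x)
    (hP2 : ∀ x ∈ S, F x ≠ F (αf x))
    (hP3 : ∀ x ∈ S, r x (F x) ≠ r (βf x) (F (βf x))) :
    (∀ e : E, (m e = 0 ∧ ∃ e' ∈ S, ea e' = ea e) → F e = fA e) ∧
    (∀ e : E, (m e = 0 ∧ ¬ (∃ e' ∈ S, ea e' = ea e) ∧ ∃ e' ∈ S, eb e' = eb e) →
      F e = fB e) ∧
    (∀ e g : E, e ≠ g →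
      ((m e = 0 ∧ ((∃ e' ∈ S, ea e' = ea e) ∨ (∃ e' ∈ S, eb e' = eb e))) ∨ e ∈ S) →
      ((m g = 0 ∧ ((∃ e' ∈ S, ea e' = ea g) ∨ (∃ e' ∈ S, eb e' = eb g))) ∨ g ∈ S) →
      (ea e = ea g → F e ≠ F g) ∧
      (eb e = eb g → r e (F e) ≠ r g (F g))) := by
  classical
  have hclause1 : ∀ e : E, (m e = 0 ∧ ∃ e' ∈ S, ea e' = ea e) → F e = fA e := by
    rintro e ⟨hm, hex⟩
    have heS : e ∉ S := fun h => hS2f e h hm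
    rw [hP0 e heS, F0def, if_pos hex]
  have hclause2 : ∀ e : E,
      (m e = 0 ∧ ¬ (∃ e' ∈ S, ea e' = ea e) ∧ ∃ e' ∈ S, eb e' = eb e) → F e = fB e := by
    rintro e ⟨hm, hnex, hex⟩
    have heS : e ∉ S := fun h => hS2f e h hm
    rw [hP0 e heS, F0def, if_neg hnex]
  -- the key inequality between a cycle edge and an M-edge at a common A-vertex
  have hkeyA : ∀ x ∈ S, ∀ g, g ∉ S → m g = 0 → ea g = ea x → F x ≠ F g := by
    intro x hx g hgS hmg heag
    have hgM : g = hMA (ea x) := hMAuniq (ea x) g hmg heag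
    have hFg : F g = fA g := hclause1 g ⟨hmg, x, hx, heag.symm⟩
    have h1 := hP1 x hx
    simp only [elistdef, Finset.mem_filter] at h1
    rw [hFg, hgM]
    exact h1.2.1
  have hkeyB : ∀ x ∈ S, ∀ g, g ∉ S → m g = 0 → eb g = eb x →
      r x (F x) ≠ r g (F g) := by
    intro x hx g hgS hmg hebg
    have hgM : g = hMB (eb x) := hMBuniq (eb x) g hmg hebg
    have hFg : F g = F0def S ea fA fB g := hP0 g hgS
    have h1 := hP1 x hx
    simp only [elistdef, Finset.mem_filter] at h1
    rw [hFg, hgM]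
    exact h1.2.2
  refine ⟨hclause1, hclause2, ?_⟩
  intro e g hne hrele hrelg
  constructor
  · intro heq
    by_cases heS : e ∈ S <;> by_cases hgS : g ∈ S
    · rcases hαuniq e heS g hgS heq.symm with h | h
      · exact absurd h.symm hne
      · rw [h]; exact hP2 e heS
    · have hmg : m g = 0 := by
        rcases hrelg with ⟨h, _⟩ | h
        · exact h
        · exact absurd h hgS
      exact hkeyA e heS g hgS hmg heq.symm
    · have hme : m e = 0 := by
        rcases hrele with ⟨h, _⟩ | h
        · exact h
        · exact absurd h heS
      exact (hkeyA g hgS e heS hme heq).symm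
    · have hme : m e = 0 := by
        rcases hrele with ⟨h, _⟩ | h
        · exact h
        · exact absurd h heS
      have hmg : m g = 0 := by
        rcases hrelg with ⟨h, _⟩ | h
        · exact h
        · exact absurd h hgS
      exact absurd ((hMAuniq (ea e) e hme rfl).trans
        (hMAuniq (ea e) g hmg heq.symm).symm) hne
  · intro heq
    by_cases heS : e ∈ S <;> by_cases hgS : g ∈ S
    · rcases hβuniq e heS g hgS heq.symm with h | h
      · exact absurd h.symm hne
      · rw [h]; exact hP3 e heS
    · have hmg : m g = 0 := by
        rcases hrelg with ⟨h, _⟩ | h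
        · exact h
        · exact absurd h hgS
      exact hkeyB e heS g hgS hmg heq.symm
    · have hme : m e = 0 := by
        rcases hrele with ⟨h, _⟩ | h
        · exact h
        · exact absurd h heS
      exact (hkeyB g hgS e heS hme heq).symm
    · have hme : m e = 0 := by
        rcases hrele with ⟨h, _⟩ | h
        · exact h
        · exact absurd h heS
      have hmg : m g = 0 := by
        rcases hrelg with ⟨h, _⟩ | h
        · exact h
        · exact absurd h hgS
      exact absurd ((hMBuniq (eb e) e hme rfl).trans
        (hMBuniq (eb e) g hmg heq.symm).symm) hne

end Stmt12

open Stmt12 in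
/-- The key claim (MA) of the proof: in a cubic bipartite multigraph decomposed
into three perfect matchings (colour classes of `m : E → Fin 3`; `M` is the
class `0`), for any cycle `S` of the 2-factor formed by the other two classes
there is a precolouring `fA` of the `M`-edges incident with the A-side of `S`
such that for every colouring `fB` of the remaining `M`-edges incident with the
B-side of `S`, the colouring extends to the edges of `S`, giving a proper
distortion-colouring of all these edges together. -/
theorem stmt_12 {A B E : Type} [Fintype E] [DecidableEq A] [DecidableEq B]
    (ea : E → A) (eb : E → B) (r : E → Equiv.Perm (Fin 4))
    (hA : ∀ v : A, (Finset.univ.filter fun e => ea e = v).card = 3)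
    (hB : ∀ v : B, (Finset.univ.filter fun e => eb e = v).card = 3)
    (m : E → Fin 3)
    (hmA : ∀ i : Fin 3, ∀ v : A,
      (Finset.univ.filter fun e => m e = i ∧ ea e = v).card = 1)
    (hmB : ∀ i : Fin 3, ∀ v : B,
      (Finset.univ.filter fun e => m e = i ∧ eb e = v).card = 1)
    (S : Finset E) (hSne : S.Nonempty)
    (hS2f : ∀ e ∈ S, m e ≠ 0)
    (hSregA : ∀ v : A, (∃ e ∈ S, ea e = v) →
      (S.filter fun e => ea e = v).card = 2)
    (hSregB : ∀ v : B, (∃ e ∈ S, eb e = v) →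
      (S.filter fun e => eb e = v).card = 2)
    (hSconn : ∀ e ∈ S, ∀ g ∈ S,
      Relation.ReflTransGen
        (fun x y => x ∈ S ∧ y ∈ S ∧ (ea x = ea y ∨ eb x = eb y)) e g) :
    ∃ fA : E → Fin 4, ∀ fB : E → Fin 4, ∃ F : E → Fin 4,
      (∀ e : E, (m e = 0 ∧ ∃ e' ∈ S, ea e' = ea e) → F e = fA e) ∧
      (∀ e : E, (m e = 0 ∧ ¬ (∃ e' ∈ S, ea e' = ea e) ∧ ∃ e' ∈ S, eb e' = eb e) →
        F e = fB e) ∧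
      (∀ e g : E, e ≠ g →
        ((m e = 0 ∧ ((∃ e' ∈ S, ea e' = ea e) ∨ (∃ e' ∈ S, eb e' = eb e))) ∨ e ∈ S) →
        ((m g = 0 ∧ ((∃ e' ∈ S, ea e' = ea g) ∨ (∃ e' ∈ S, eb e' = eb g))) ∨ g ∈ S) →
        (ea e = ea g → F e ≠ F g) ∧
        (eb e = eb g → r e (F e) ≠ r g (F g))) := by
  classical
  -- the unique `M`-edge at each vertex
  have hA1 : ∀ v : A, ∃ h : E, (m h = 0 ∧ ea h = v) ∧
      ∀ e, m e = 0 → ea e = v → e = h := by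
    intro v
    obtain ⟨h, hh⟩ := Finset.card_eq_one.mp (hmA 0 v)
    have hmem : h ∈ Finset.univ.filter fun e => m e = 0 ∧ ea e = v := by
      rw [hh]; exact Finset.mem_singleton_self h
    simp only [Finset.mem_filter, Finset.mem_univ, true_and] at hmem
    refine ⟨h, hmem, ?_⟩
    intro e hme hev
    have h2 : e ∈ Finset.univ.filter fun e => m e = 0 ∧ ea e = v := by
      simp only [Finset.mem_filter, Finset.mem_univ, true_and]; exact ⟨hme, hev⟩
    rw [hh, Finset.mem_singleton] at h2; exact h2
  choose hMA hMAs hMAu using hA1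
  have hB1 : ∀ w : B, ∃ h : E, (m h = 0 ∧ eb h = w) ∧
      ∀ e, m e = 0 → eb e = w → e = h := by
    intro w
    obtain ⟨h, hh⟩ := Finset.card_eq_one.mp (hmB 0 w)
    have hmem : h ∈ Finset.univ.filter fun e => m e = 0 ∧ eb e = w := by
      rw [hh]; exact Finset.mem_singleton_self h
    simp only [Finset.mem_filter, Finset.mem_univ, true_and] at hmem
    refine ⟨h, hmem, ?_⟩
    intro e hme hev
    have h2 : e ∈ Finset.univ.filter fun e => m e = 0 ∧ eb e = w := by
      simp only [Finset.mem_filter, Finset.mem_univ, true_and]; exact ⟨hme, hev⟩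
    rw [hh, Finset.mem_singleton] at h2; exact h2
  choose hMB hMBs hMBu using hB1
  -- the two cycle partners of each cycle edge
  have hα1 : ∀ x : E, ∃ y : E, x ∈ S →
      ((y ∈ S ∧ y ≠ x ∧ ea y = ea x) ∧ ∀ z ∈ S, ea z = ea x → z = x ∨ z = y) := by
    intro x
    by_cases hx : x ∈ S
    · have hc := hSregA (ea x) ⟨x, hx, rfl⟩
      have hxm : x ∈ S.filter fun e => ea e = ea x := Finset.mem_filter.mpr ⟨hx, rfl⟩
      have hce : ((S.filter fun e => ea e = ea x).erase x).card = 1 := by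
        rw [Finset.card_erase_of_mem hxm, hc]
      obtain ⟨y, hy⟩ := Finset.card_eq_one.mp hce
      have hymem : y ∈ (S.filter fun e => ea e = ea x).erase x := by
        rw [hy]; exact Finset.mem_singleton_self y
      have hyne : y ≠ x := (Finset.mem_erase.mp hymem).1
      have hy2 := Finset.mem_filter.mp (Finset.mem_of_mem_erase hymem)
      refine ⟨y, fun _ => ⟨⟨hy2.1, hyne, hy2.2⟩, ?_⟩⟩
      intro z hz hze
      by_cases hzx : z = x
      · exact Or.inl hzx
      · right
        have h3 : z ∈ (S.filter fun e => ea e = ea x).erase x :=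
          Finset.mem_erase.mpr ⟨hzx, Finset.mem_filter.mpr ⟨hz, hze⟩⟩
        rw [hy, Finset.mem_singleton] at h3; exact h3
    · exact ⟨x, fun h => absurd h hx⟩
  choose αf hαf using hα1
  have hβ1 : ∀ x : E, ∃ y : E, x ∈ S →
      ((y ∈ S ∧ y ≠ x ∧ eb y = eb x) ∧ ∀ z ∈ S, eb z = eb x → z = x ∨ z = y) := by
    intro x
    by_cases hx : x ∈ S
    · have hc := hSregB (eb x) ⟨x, hx, rfl⟩
      have hxm : x ∈ S.filter fun e => eb e = eb x := Finset.mem_filter.mpr ⟨hx, rfl⟩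
      have hce : ((S.filter fun e => eb e = eb x).erase x).card = 1 := by
        rw [Finset.card_erase_of_mem hxm, hc]
      obtain ⟨y, hy⟩ := Finset.card_eq_one.mp hce
      have hymem : y ∈ (S.filter fun e => eb e = eb x).erase x := by
        rw [hy]; exact Finset.mem_singleton_self y
      have hyne : y ≠ x := (Finset.mem_erase.mp hymem).1
      have hy2 := Finset.mem_filter.mp (Finset.mem_of_mem_erase hymem)
      refine ⟨y, fun _ => ⟨⟨hy2.1, hyne, hy2.2⟩, ?_⟩⟩
      intro z hz hze
      by_cases hzx : z = x
      · exact Or.inl hzx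
      · right
        have h3 : z ∈ (S.filter fun e => eb e = eb x).erase x :=
          Finset.mem_erase.mpr ⟨hzx, Finset.mem_filter.mpr ⟨hz, hze⟩⟩
        rw [hy, Finset.mem_singleton] at h3; exact h3
    · exact ⟨x, fun h => absurd h hx⟩
  choose βf hβf using hβ1
  have hαS : ∀ x ∈ S, αf x ∈ S := fun x hx => ((hαf x hx).1).1
  have hαne : ∀ x ∈ S, αf x ≠ x := fun x hx => ((hαf x hx).1).2.1
  have hαea : ∀ x ∈ S, ea (αf x) = ea x := fun x hx => ((hαf x hx).1).2.2
  have hαuniq : ∀ x ∈ S, ∀ z ∈ S, ea z = ea x → z = x ∨ z = αf x :=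
    fun x hx => (hαf x hx).2
  have hβS : ∀ x ∈ S, βf x ∈ S := fun x hx => ((hβf x hx).1).1
  have hβne : ∀ x ∈ S, βf x ≠ x := fun x hx => ((hβf x hx).1).2.1
  have hβeb : ∀ x ∈ S, eb (βf x) = eb x := fun x hx => ((hβf x hx).1).2.2
  have hβuniq : ∀ x ∈ S, ∀ z ∈ S, eb z = eb x → z = x ∨ z = βf x :=
    fun x hx => (hβf x hx).2
  have hαinv : ∀ x ∈ S, αf (αf x) = x := by
    intro x hx
    rcases hαuniq (αf x) (hαS x hx) x hx (hαea x hx).symm with h | h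
    · exact absurd h.symm (hαne x hx)
    · exact h.symm
  have hβinv : ∀ x ∈ S, βf (βf x) = x := by
    intro x hx
    rcases hβuniq (βf x) (hβS x hx) x hx (hβeb x hx).symm with h | h
    · exact absurd h.symm (hβne x hx)
    · exact h.symm
  have hconnAll : ∀ e0 ∈ S, ∀ g ∈ S, Relation.ReflTransGen
      (fun x y => x ∈ S ∧ y ∈ S ∧ (y = αf x ∨ y = βf x)) e0 g := by
    intro e0 he0 g hg
    have h := hSconn e0 he0 g hg
    clear hg
    induction h with
    | refl => exact Relation.ReflTransGen.refl
    | tail hab hbc ih =>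
      obtain ⟨hbS, hcS, hshare⟩ := hbc
      rcases hshare with hea | heb
      · rcases hαuniq _ hbS _ hcS hea.symm with h2 | h2
        · rw [h2]; exact ih
        · exact ih.tail ⟨hbS, hcS, Or.inl h2⟩
      · rcases hβuniq _ hbS _ hcS heb.symm with h2 | h2
        · rw [h2]; exact ih
        · exact ih.tail ⟨hbS, hcS, Or.inr h2⟩
  have hsucc_ne : ∀ x : Fin 4, x + 1 ≠ x := by decide
  by_cases hmain : ∃ e ∈ S, ea (βf e) ≠ ea e
  · -- the main case: some B-pair has distinct A-endvertices
    obtain ⟨p, hp, hpne⟩ := hmain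
    have hq : βf p ∈ S := hβS p hp
    have hMne : hMA (ea p) ≠ hMA (ea (βf p)) := by
      intro h
      apply hpne
      have h1 : ea (hMA (ea p)) = ea p := (hMAs (ea p)).2
      have h2 : ea (hMA (ea (βf p))) = ea (βf p) := (hMAs _).2
      rw [← h1, h, h2]
    set fA : E → Fin 4 :=
      fun x => if x = hMA (ea (βf p)) then (r (βf p)).symm (r p 0 + 1) else 0
      with hfAdef
    refine ⟨fA, ?_⟩
    intro fB
    have hfAq : fA (hMA (ea (βf p))) = (r (βf p)).symm (r p 0 + 1) := by
      rw [hfAdef]; simp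
    have hfAp : fA (hMA (ea p)) = 0 := by
      rw [hfAdef]; simp [hMne]
    have hra : r (βf p) (fA (hMA (ea (βf p)))) ≠ r p (fA (hMA (ea p))) := by
      rw [hfAq, hfAp, Equiv.apply_symm_apply]; exact hsucc_ne _
    by_cases hbig : ∃ x ∈ S, 3 ≤ (elistdef S ea eb r hMA hMB fA fB x).card
    · obtain ⟨x0, hx0, hx0c⟩ := hbig
      obtain ⟨F, hP0, hP1, hP2, hP3⟩ := build S αf βf x0 r
        (elistdef S ea eb r hMA hMB fA fB) (F0def S ea fA fB)
        hαS hαne hαinv hβS hβne hβinv hx0 (hconnAll x0 hx0)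
        (fun x _ => elist_card2 S ea eb r hMA hMB fA fB x) (Or.inl hx0c)
      exact ⟨F, finalize ea eb r m S αf βf hMA hMB hS2f hMAu hMBu hαuniq hβuniq
        fA fB F hP0 hP1 hP2 hP3⟩
    · push_neg at hbig
      have hseam : 3 ≤ (elistdef S ea eb r hMA hMB fA fB (βf p)).card ∨
          ∃ t ∈ elistdef S ea eb r hMA hMB fA fB (βf (βf p)),
            (r (βf p)).symm (r (βf (βf p)) t) ∉
              elistdef S ea eb r hMA hMB fA fB (βf p) := by
        right
        rw [hβinv p hp]
        refine ⟨(r p).symm (r (βf p) (fA (hMA (ea (βf p))))), ?_, ?_⟩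
        · simp only [elistdef, Finset.mem_filter, Finset.mem_univ, true_and]
          constructor
          · intro h
            apply hra
            rw [← h]
            exact (Equiv.apply_symm_apply _ _).symm
          · rw [Equiv.apply_symm_apply]
            intro h
            apply absurd (elist_card3 S ea eb r hMA hMB fA fB (βf p) ?_)
            · exact not_le.mpr (hbig (βf p) hq)
            · rw [hβeb p hp, ← h, Equiv.symm_apply_apply]
        · rw [Equiv.apply_symm_apply, Equiv.symm_apply_apply]
          simp only [elistdef, Finset.mem_filter, Finset.mem_univ, true_and, not_and]
          intro h
          exact absurd rfl h
      obtain ⟨F, hP0, hP1, hP2, hP3⟩ := build S αf βf (βf p) r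
        (elistdef S ea eb r hMA hMB fA fB) (F0def S ea fA fB)
        hαS hαne hαinv hβS hβne hβinv hq (hconnAll (βf p) hq)
        (fun x _ => elist_card2 S ea eb r hMA hMB fA fB x) hseam
      exact ⟨F, finalize ea eb r m S αf βf hMA hMB hS2f hMAu hMBu hαuniq hβuniq
        fA fB F hP0 hP1 hP2 hP3⟩
  · -- the 2-cycle case
    push_neg at hmain
    obtain ⟨p, hp⟩ := hSne
    have hβα : ∀ x ∈ S, βf x = αf x := by
      intro x hx
      rcases hαuniq x hx (βf x) (hβS x hx) (hmain x hx) with h | h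
      · exact absurd h (hβne x hx)
      · exact h
    have hq : αf p ∈ S := hαS p hp
    have hS2 : ∀ x ∈ S, x = p ∨ x = αf p := by
      intro x hx
      have h := hconnAll p hp x hx
      clear hx
      induction h with
      | refl => exact Or.inl rfl
      | tail hab hbc ih =>
        obtain ⟨hbS, hcS, hc | hc⟩ := hbc <;> subst hc
        · rcases ih with rfl | h2
          · exact Or.inr rfl
          · left; rw [h2, hαinv p hp]
        · rw [hβα _ hbS]
          rcases ih with rfl | h2
          · exact Or.inr rfl
          · left; rw [h2, hαinv p hp]
    have heaq : ea (αf p) = ea p := hαea p hp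
    have hebq : eb (αf p) = eb p := by rw [← hβα p hp]; exact hβeb p hp
    by_cases hrpq : r p = r (αf p)
    · -- equal permutations: direct colouring
      refine ⟨fun _ => (0 : Fin 4), ?_⟩
      intro fB
      have helist_eq :
          elistdef S ea eb r hMA hMB (fun _ => (0:Fin 4)) fB (αf p) =
          elistdef S ea eb r hMA hMB (fun _ => (0:Fin 4)) fB p := by
        simp only [elistdef]; rw [hebq, ← hrpq]
      obtain ⟨c1, hc1, c2, hc2, hc12⟩ := Finset.one_lt_card.mp
        (lt_of_lt_of_le one_lt_two
          (elist_card2 S ea eb r hMA hMB (fun _ => (0:Fin 4)) fB p))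
      set F : E → Fin 4 := fun x => if x ∈ S then (if x = p then c1 else c2)
        else F0def S ea (fun _ => (0:Fin 4)) fB x with hFdef
      have hP0 : ∀ x, x ∉ S → F x = F0def S ea (fun _ => (0:Fin 4)) fB x := by
        intro x hx; rw [hFdef]; simp [hx]
      have hFp : F p = c1 := by rw [hFdef]; simp [hp]
      have hFq : F (αf p) = c2 := by rw [hFdef]; simp [hq, hαne p hp]
      have hP1 : ∀ x ∈ S, F x ∈ elistdef S ea eb r hMA hMB (fun _ => (0:Fin 4)) fB x := by
        intro x hx
        rcases hS2 x hx with h | h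
        · rw [h, hFp]; exact hc1
        · rw [h, hFq, helist_eq]; exact hc2
      have hP2 : ∀ x ∈ S, F x ≠ F (αf x) := by
        intro x hx
        rcases hS2 x hx with h | h
        · rw [h, hFp, hFq]; exact hc12
        · rw [h, hαinv p hp, hFq, hFp]; exact hc12.symm
      have hP3 : ∀ x ∈ S, r x (F x) ≠ r (βf x) (F (βf x)) := by
        intro x hx
        rw [hβα x hx]
        rcases hS2 x hx with h | h
        · rw [h, hFp, hFq, ← hrpq]
          intro hh; exact hc12 ((r p).injective hh)
        · rw [h, hαinv p hp, hFq, hFp, ← hrpq]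
          intro hh; exact hc12.symm ((r p).injective hh)
      exact ⟨F, finalize ea eb r m S αf βf hMA hMB hS2f hMAu hMBu hαuniq hβuniq
        (fun _ => (0:Fin 4)) fB F hP0 hP1 hP2 hP3⟩
    · -- distinct permutations on the 2-cycle
      have hy : ∃ y, r p y ≠ r (αf p) y := by
        by_contra h; push_neg at h; exact hrpq (Equiv.ext h)
      obtain ⟨y, hyne⟩ := hy
      set fA : E → Fin 4 := fun x => if x = hMA (ea p) then y else 0 with hfAdef
      refine ⟨fA, ?_⟩
      intro fB
      have hfAp : fA (hMA (ea p)) = y := by rw [hfAdef]; simp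
      by_cases hbig : ∃ x ∈ S, 3 ≤ (elistdef S ea eb r hMA hMB fA fB x).card
      · obtain ⟨x0, hx0, hx0c⟩ := hbig
        obtain ⟨F, hP0, hP1, hP2, hP3⟩ := build S αf βf x0 r
          (elistdef S ea eb r hMA hMB fA fB) (F0def S ea fA fB)
          hαS hαne hαinv hβS hβne hβinv hx0 (hconnAll x0 hx0)
          (fun x _ => elist_card2 S ea eb r hMA hMB fA fB x) (Or.inl hx0c)
        exact ⟨F, finalize ea eb r m S αf βf hMA hMB hS2f hMAu hMBu hαuniq hβuniq
          fA fB F hP0 hP1 hP2 hP3⟩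
      · push_neg at hbig
        have hseam : 3 ≤ (elistdef S ea eb r hMA hMB fA fB p).card ∨
            ∃ t ∈ elistdef S ea eb r hMA hMB fA fB (βf p),
              (r p).symm (r (βf p) t) ∉ elistdef S ea eb r hMA hMB fA fB p := by
          right
          rw [hβα p hp]
          refine ⟨(r (αf p)).symm (r p y), ?_, ?_⟩
          · simp only [elistdef, Finset.mem_filter, Finset.mem_univ, true_and]
            constructor
            · rw [heaq, hfAp]
              intro h
              have h2 := congrArg (r (αf p)) h
              rw [Equiv.apply_symm_apply] at h2
              exact hyne h2
            · rw [Equiv.apply_symm_apply, hebq]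
              intro h
              apply absurd (elist_card3 S ea eb r hMA hMB fA fB p ?_)
              · exact not_le.mpr (hbig p hp)
              · rw [hfAp, ← h, Equiv.symm_apply_apply]
          · rw [Equiv.apply_symm_apply, Equiv.symm_apply_apply]
            simp only [elistdef, Finset.mem_filter, Finset.mem_univ, true_and, not_and]
            intro h
            exact absurd hfAp.symm h
        obtain ⟨F, hP0, hP1, hP2, hP3⟩ := build S αf βf p r
          (elistdef S ea eb r hMA hMB fA fB) (F0def S ea fA fB)
          hαS hαne hαinv hβS hβne hβinv hp (hconnAll p hp)
          (fun x _ => elist_card2 S ea eb r hMA hMB fA fB x) hseam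
        exact ⟨F, finalize ea eb r m S αf βf hMA hMB hS2f hMAu hMBu hαuniq hβuniq
          fA fB F hP0 hP1 hP2 hP3⟩
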